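/- arXiv:1407.3993 — 7 statements merged into one kernel-verified Lean document; each statement's English description precedes it below -/
import Mathlib

section
/- Let μ : ℕ → ℤ be a Conley–Zehnder iteration sequence. Then for every integer k ≥ 1 one has k·μ(1) − k + 1 ≤ μ(k) ≤ k·μ(1) + k − 1. (This is the paper's Proposition that in dimension 3 the Conley–Zehnder index grows almost linearly under iteration: for any closed Reeb orbit γ of a nondegenerate contact 3-manifold, k·μ_CZ(γ) − k + 1 ≤ μ_CZ(γ^k) ≤ k·μ_CZ(γ) + k − 1.) -/
/-- A Conley–Zehnder iteration sequence of elliptic type: there is a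
non-integer real rotation angle `θ` with `μ k = 2⌊kθ⌋ + 1` for all `k ≥ 1`. -/
def IsEllipticCZSeq (μ : ℕ → ℤ) : Prop :=
  ∃ θ : ℝ, (∀ n : ℤ, θ ≠ (n : ℝ)) ∧ ∀ k : ℕ, 1 ≤ k → μ k = 2 * ⌊(k : ℝ) * θ⌋ + 1

/-- A Conley–Zehnder iteration sequence of hyperbolic type: there is an
integer `r` with `μ k = k·r` for all `k ≥ 1`. -/
def IsHyperbolicCZSeq (μ : ℕ → ℤ) : Prop :=
  ∃ r : ℤ, ∀ k : ℕ, 1 ≤ k → μ k = (k : ℤ) * r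

/-- A Conley–Zehnder iteration sequence: either elliptic or hyperbolic type. -/
def IsCZSeq (μ : ℕ → ℤ) : Prop :=
  IsEllipticCZSeq μ ∨ IsHyperbolicCZSeq μ

/-- Almost-linear growth of the Conley–Zehnder index under iteration:
for any Conley–Zehnder iteration sequence μ and any k ≥ 1,
k·μ(1) − k + 1 ≤ μ(k) ≤ k·μ(1) + k − 1. -/
theorem cz_almost_linear (μ : ℕ → ℤ) (hμ : IsCZSeq μ) (k : ℕ) (hk : 1 ≤ k) :
    (k : ℤ) * μ 1 - k + 1 ≤ μ k ∧ μ k ≤ (k : ℤ) * μ 1 + k - 1 := by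
  have hk1 : (1 : ℤ) ≤ (k : ℤ) := by exact_mod_cast hk
  rcases hμ with ⟨θ, hθ, h⟩ | ⟨r, h⟩
  · have h1 := h 1 le_rfl
    have hkk := h k hk
    have hkR : (0 : ℝ) < (k : ℝ) := by positivity
    -- lower bound: k⌊θ⌋ ≤ ⌊kθ⌋
    have hlow : (k : ℤ) * ⌊θ⌋ ≤ ⌊(k : ℝ) * θ⌋ := by
      rw [Int.le_floor]
      push_cast
      exact mul_le_mul_of_nonneg_left (Int.floor_le θ) hkR.le
    -- upper bound: ⌊kθ⌋ < k⌊θ⌋ + k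
    have hup : ⌊(k : ℝ) * θ⌋ < (k : ℤ) * ⌊θ⌋ + k := by
      rw [Int.floor_lt]
      push_cast
      have : θ < (⌊θ⌋ : ℝ) + 1 := Int.lt_floor_add_one θ
      calc (k : ℝ) * θ < (k : ℝ) * ((⌊θ⌋ : ℝ) + 1) :=
            mul_lt_mul_of_pos_left this hkR
        _ = (k : ℝ) * (⌊θ⌋ : ℝ) + k := by ring
    simp only [Nat.cast_one, one_mul] at h1
    rw [h1, hkk]
    constructor <;> [nlinarith; nlinarith]
  · have h1 := h 1 le_rfl
    have hkk := h k hk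
    simp only [Nat.cast_one, one_mul] at h1
    rw [h1, hkk]
    constructor <;> nlinarith
end

section
/- Let μ₊ and μ₋ be Conley–Zehnder iteration sequences with μ₊(1) − μ₋(1) ≥ 2. Then for every integer k ≥ 1 one has μ₊(k) − μ₋(k) ≥ 2. (Numeric content of the first case of the paper's proposition on covers of cylinders: any k-fold unbranched cover of a finite energy cylinder of Fredholm index at least 2, asymptotic to γ₊^k and γ₋^k, again has Fredholm index μ_CZ(γ₊^k) − μ_CZ(γ₋^k) ≥ 2.) -/
lemma floor_mul_lower (θ : ℝ) (k : ℕ) : (k : ℤ) * ⌊θ⌋ ≤ ⌊(k : ℝ) * θ⌋ := by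
  rw [Int.le_floor]
  push_cast
  exact mul_le_mul_of_nonneg_left (Int.floor_le θ) (by positivity)

lemma floor_mul_upper (θ : ℝ) (k : ℕ) (hk : 1 ≤ k) :
    ⌊(k : ℝ) * θ⌋ ≤ (k : ℤ) * ⌊θ⌋ + k - 1 := by
  have h1 : (k : ℝ) * θ < (k : ℝ) * (⌊θ⌋ + 1) := by
    have : (0 : ℝ) < k := by exact_mod_cast hk
    exact mul_lt_mul_of_pos_left (Int.lt_floor_add_one θ) this
  have h2 : ⌊(k : ℝ) * θ⌋ < (k : ℤ) * (⌊θ⌋ + 1) := by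
    rw [Int.floor_lt]; push_cast; linarith
  rw [mul_add, mul_one] at h2; omega

/-- If two Conley–Zehnder iteration sequences satisfy μ₊(1) − μ₋(1) ≥ 2,
then μ₊(k) − μ₋(k) ≥ 2 for every k ≥ 1. -/
theorem cz_index_ge_two_iterates (μpos μneg : ℕ → ℤ)
    (hpos : IsCZSeq μpos) (hneg : IsCZSeq μneg)
    (h : μpos 1 - μneg 1 ≥ 2) (k : ℕ) (hk : 1 ≤ k) :
    μpos k - μneg k ≥ 2 := by
  rcases hpos with ⟨θp, _, hp⟩ | ⟨rp, hp⟩ <;> rcases hneg with ⟨θn, _, hn⟩ | ⟨rn, hn⟩ <;>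
    rw [hp k hk, hn k hk] <;>
    have h1 := h <;> rw [hp 1 le_rfl, hn 1 le_rfl] at h1
  · -- elliptic / elliptic
    simp only [Nat.cast_one, one_mul] at h1
    have lp := floor_mul_lower θp k
    have un := floor_mul_upper θn k hk
    have : (⌊θn⌋ : ℤ) + 1 ≤ ⌊θp⌋ := by omega
    have : (k : ℤ) * (⌊θn⌋ + 1) ≤ (k : ℤ) * ⌊θp⌋ :=
      mul_le_mul_of_nonneg_left this (by exact_mod_cast Nat.zero_le k)
    have hk' : (1 : ℤ) ≤ k := by exact_mod_cast hk
    nlinarith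
  · -- elliptic / hyperbolic
    simp only [Nat.cast_one, one_mul] at h1
    have lp := floor_mul_lower θp k
    have hk' : (1 : ℤ) ≤ k := by exact_mod_cast hk
    have : rn ≤ 2 * ⌊θp⌋ - 1 := by omega
    nlinarith
  · -- hyperbolic / elliptic
    simp only [Nat.cast_one, one_mul] at h1
    have un := floor_mul_upper θn k hk
    have hk' : (1 : ℤ) ≤ k := by exact_mod_cast hk
    have : 2 * ⌊θn⌋ + 3 ≤ rp := by omega
    nlinarith
  · -- hyperbolic / hyperbolic
    simp only [Nat.cast_one, one_mul] at h1
    have hk' : (1 : ℤ) ≤ k := by exact_mod_cast hk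
    nlinarith
end

section
/- Let μ₊ and μ₋ be Conley–Zehnder iteration sequences with μ₊(1) − μ₋(1) ≥ 3. Then for every integer k ≥ 1 one has μ₊(k) − μ₋(k) ≥ 3. (Numeric content of the index step in the paper's lemma on unbranched covers: if a k-fold unbranched cover of a cylinder has Fredholm index at most 2, then the underlying somewhere injective cylinder also has Fredholm index at most 2.) -/
/-- If μ₊(1) − μ₋(1) ≥ 3 then μ₊(k) − μ₋(k) ≥ 3 for every k ≥ 1. -/
theorem cz_index_ge_three_iterates (μpos μneg : ℕ → ℤ)
    (hpos : IsCZSeq μpos) (hneg : IsCZSeq μneg)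
    (h : μpos 1 - μneg 1 ≥ 3) (k : ℕ) (hk : 1 ≤ k) :
    μpos k - μneg k ≥ 3 := by
  have hk' : (1 : ℤ) ≤ (k : ℤ) := by exact_mod_cast hk
  have lb : ∀ θ : ℝ, (k : ℤ) * ⌊θ⌋ ≤ ⌊(k : ℝ) * θ⌋ := by
    intro θ
    apply Int.le_floor.2
    push_cast
    exact mul_le_mul_of_nonneg_left (Int.floor_le θ) (by positivity)
  have ub : ∀ θ : ℝ, ⌊(k : ℝ) * θ⌋ ≤ (k : ℤ) * ⌊θ⌋ + k - 1 := by
    intro θ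
    have h1 : ⌊(k : ℝ) * θ⌋ < (k : ℤ) * ⌊θ⌋ + k := by
      apply Int.floor_lt.2
      push_cast
      have h2 := Int.lt_floor_add_one θ
      have h3 : (1 : ℝ) ≤ (k : ℝ) := by exact_mod_cast hk
      nlinarith
    omega
  rcases hpos with ⟨θp, -, hp⟩ | ⟨rp, hp⟩ <;> rcases hneg with ⟨θn, -, hn⟩ | ⟨rn, hn⟩ <;>
    rw [hp 1 le_rfl, hn 1 le_rfl] at h <;> rw [hp k hk, hn k hk] <;>
    push_cast at h ⊢ <;> simp only [one_mul] at h <;>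
    [ (have a1 := lb θp; have a2 := ub θn); (have a1 := lb θp);
      (have a2 := ub θn); skip ] <;>
    nlinarith [hk', mul_le_mul_of_nonneg_left h (le_of_lt (by exact_mod_cast Nat.pos_of_ne_zero (by omega) : (0:ℤ) < (k:ℤ)))]
end

section
/- Let s ≥ 0, k ≥ 1 and b ≥ 0 be integers, and let μ₊ and μ₀, …, μ_s be Conley–Zehnder iteration sequences satisfying the index hypothesis s + μ₊(1) − (μ₀(1) + ⋯ + μ_s(1)) ≥ 1. For each i ∈ {0, …, s}, let e_{i,1}, …, e_{i,nᵢ} be positive integers with e_{i,1} + ⋯ + e_{i,nᵢ} = k, and suppose n₀ + ⋯ + n_s = 1 + k·s + b. Then (k·s + b) + μ₊(k) − Σᵢ Σⱼ μᵢ(e_{i,j}) ≥ 2 − k + 2b. (This is the index estimate in the paper's proposition on branched covers: a genus-zero k-fold cover with one positive puncture and b branch points counted with multiplicity of a somewhere injective curve with one positive end and s+1 negative ends, in the symplectization of a nondegenerate contact 3-manifold with generic J, has 1 + ks + b negative punctures and Fredholm index at least 2 − k + 2b.) -/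
lemma czseq_lower (μ : ℕ → ℤ) (h : IsCZSeq μ) (k : ℕ) (hk : 1 ≤ k) :
    (k : ℤ) * μ 1 - ((k : ℤ) - 1) ≤ μ k := by
  rcases h with ⟨θ, -, hθ⟩ | ⟨r, hr⟩
  · rw [hθ k hk, hθ 1 le_rfl]
    have h1 : (k : ℤ) * ⌊θ⌋ ≤ ⌊(k : ℝ) * θ⌋ := by
      rw [Int.le_floor]
      push_cast
      exact mul_le_mul_of_nonneg_left (Int.floor_le θ) (by positivity)
    simp only [Nat.cast_one, one_mul]
    have hk1 : (1 : ℤ) ≤ (k : ℤ) := by exact_mod_cast hk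
    nlinarith [h1]
  · rw [hr k hk, hr 1 le_rfl]
    have hk1 : (1 : ℤ) ≤ (k : ℤ) := by exact_mod_cast hk
    push_cast
    nlinarith

lemma czseq_upper (μ : ℕ → ℤ) (h : IsCZSeq μ) (k : ℕ) (hk : 1 ≤ k) :
    μ k ≤ (k : ℤ) * μ 1 + ((k : ℤ) - 1) := by
  rcases h with ⟨θ, -, hθ⟩ | ⟨r, hr⟩
  · rw [hθ k hk, hθ 1 le_rfl]
    have h1 : ⌊(k : ℝ) * θ⌋ ≤ (k : ℤ) * ⌊θ⌋ + (k : ℤ) - 1 := by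
      have : ⌊(k : ℝ) * θ⌋ < (k : ℤ) * ⌊θ⌋ + (k : ℤ) := by
        rw [Int.floor_lt]
        push_cast
        have hθlt : θ < ⌊θ⌋ + 1 := Int.lt_floor_add_one θ
        have hk0 : (0 : ℝ) < (k : ℝ) := by exact_mod_cast hk
        nlinarith
      omega
    simp only [Nat.cast_one, one_mul]
    have hk1 : (1 : ℤ) ≤ (k : ℤ) := by exact_mod_cast hk
    nlinarith [h1]
  · rw [hr k hk, hr 1 le_rfl]
    have hk1 : (1 : ℤ) ≤ (k : ℤ) := by exact_mod_cast hk
    push_cast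
    nlinarith

/-- Index estimate for branched covers of a somewhere injective curve with one
positive end and s+1 negative ends: if the underlying index
s + μ₊(1) − ∑ᵢ μᵢ(1) is at least 1, and the k-fold cover has covering
multiplicities e i j over the i-th negative orbit (each summing to k over j),
with the total number of negative punctures ∑ᵢ nᵢ = 1 + k·s + b, then the
Fredholm index (k·s + b) + μ₊(k) − ∑ᵢ∑ⱼ μᵢ(e i j) is at least 2 − k + 2b. -/
theorem cz_branched_cover_index (s k b : ℕ) (hk : 1 ≤ k)
    (μpos : ℕ → ℤ) (μ : Fin (s + 1) → ℕ → ℤ)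
    (hpos : IsCZSeq μpos) (hμ : ∀ i, IsCZSeq (μ i))
    (hind : (s : ℤ) + μpos 1 - ∑ i, μ i 1 ≥ 1)
    (n : Fin (s + 1) → ℕ) (e : (i : Fin (s + 1)) → Fin (n i) → ℕ)
    (he : ∀ i j, 1 ≤ e i j) (hesum : ∀ i, ∑ j, e i j = k)
    (hn : ∑ i, n i = 1 + k * s + b) :
    ((k * s + b : ℕ) : ℤ) + μpos k - ∑ i, ∑ j, μ i (e i j) ≥
      2 - (k : ℤ) + 2 * b := by
  -- lower bound for the positive end
  have hlow : (k : ℤ) * μpos 1 - ((k : ℤ) - 1) ≤ μpos k := czseq_lower μpos hpos k hk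
  -- per-orbit upper bound
  have hupper : ∀ i, ∑ j, μ i (e i j) ≤ (k : ℤ) * μ i 1 + (k : ℤ) - (n i : ℤ) := by
    intro i
    have step : ∑ j, μ i (e i j) ≤ ∑ j, ((e i j : ℤ) * μ i 1 + ((e i j : ℤ) - 1)) :=
      Finset.sum_le_sum fun j _ => czseq_upper (μ i) (hμ i) (e i j) (he i j)
    have hsum : ∑ j, (e i j : ℤ) = (k : ℤ) := by
      rw [← Nat.cast_sum, hesum i]
    calc ∑ j, μ i (e i j) ≤ ∑ j, ((e i j : ℤ) * μ i 1 + ((e i j : ℤ) - 1)) := step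
      _ = (∑ j, (e i j : ℤ)) * μ i 1 + (∑ j, (e i j : ℤ)) - (n i : ℤ) := by
          rw [Finset.sum_add_distrib, Finset.sum_sub_distrib, ← Finset.sum_mul]
          simp only [Finset.sum_const, Finset.card_fin, smul_eq_mul, mul_one]
          ring
      _ = (k : ℤ) * μ i 1 + (k : ℤ) - (n i : ℤ) := by rw [hsum]
  have htot : ∑ i, ∑ j, μ i (e i j) ≤
      (k : ℤ) * (∑ i, μ i 1) + ((s : ℤ) + 1) * k - ((1 : ℤ) + k * s + b) := by
    calc ∑ i, ∑ j, μ i (e i j)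
        ≤ ∑ i, ((k : ℤ) * μ i 1 + (k : ℤ) - (n i : ℤ)) :=
          Finset.sum_le_sum fun i _ => hupper i
      _ = (k : ℤ) * (∑ i, μ i 1) + ((s : ℤ) + 1) * k - ∑ i, (n i : ℤ) := by
          rw [Finset.sum_sub_distrib, Finset.sum_add_distrib, Finset.mul_sum]
          simp only [Finset.sum_const, Finset.card_fin, smul_eq_mul, mul_one]
          ring
      _ = (k : ℤ) * (∑ i, μ i 1) + ((s : ℤ) + 1) * k - ((1 : ℤ) + k * s + b) := by
          rw [← Nat.cast_sum, hn]
          push_cast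
          ring
  have hk1 : (1 : ℤ) ≤ (k : ℤ) := by exact_mod_cast hk
  have hmul : (k : ℤ) * 1 ≤ (k : ℤ) * ((s : ℤ) + μpos 1 - ∑ i, μ i 1) :=
    mul_le_mul_of_nonneg_left hind (by linarith)
  push_cast
  nlinarith [htot, hlow, hmul]
end

section
/- Let μ₊ and μ₋ be Conley–Zehnder iteration sequences with μ₊(1) − μ₋(1) = 1 and with μ₊ of hyperbolic type, and let k₁, …, k_n be positive integers with k = k₁ + ⋯ + k_n. Then (n − 1) + μ₊(k) − (μ₋(k₁) + ⋯ + μ₋(k_n)) ≥ 2n − 1. (This is case (ii) of the paper's proposition: a genus-zero branched k-fold cover with one positive puncture of an index-1 cylinder whose positive asymptotic orbit γ₊ is hyperbolic has Fredholm index at least 2n − 1.) -/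
/-- Case (ii) of the proposition on covers of nontrivial cylinders: if
μ₊(1) − μ₋(1) = 1 with μ₊ of hyperbolic type and k = k₁ + ⋯ + kₙ with
each kᵢ ≥ 1, then (n − 1) + μ₊(k) − ∑ᵢ μ₋(kᵢ) ≥ 2n − 1. -/
theorem cz_cover_cylinder_index_pos_hyperbolic (μpos μneg : ℕ → ℤ)
    (hpos : IsCZSeq μpos) (hneg : IsCZSeq μneg)
    (h : μpos 1 - μneg 1 = 1) (hhyp : IsHyperbolicCZSeq μpos)
    (n : ℕ) (hn : 1 ≤ n) (K : Fin n → ℕ) (hK : ∀ i, 1 ≤ K i)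
    (k : ℕ) (hk : k = ∑ i, K i) :
    ((n : ℤ) - 1) + μpos k - ∑ i, μneg (K i) ≥ 2 * n - 1 := by
  obtain ⟨r, hr⟩ := hhyp
  have hnk : n ≤ k := by
    rw [hk]
    calc n = ∑ _i : Fin n, 1 := by simp
      _ ≤ ∑ i, K i := Finset.sum_le_sum fun i _ => hK i
  have hk1 : 1 ≤ k := le_trans hn hnk
  have hkn : (n : ℤ) ≤ (k : ℤ) := by exact_mod_cast hnk
  have hμk : μpos k = (k : ℤ) * r := hr k hk1
  have hμ1 : μneg 1 = r - 1 := by have := hr 1 le_rfl; omega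
  have hkcast : (k : ℤ) = ∑ i, (K i : ℤ) := by rw [hk]; push_cast; ring
  rcases hneg with ⟨θ, hθ, hE⟩ | ⟨s, hH⟩
  · -- elliptic negative ends
    have h1 : μneg 1 = 2 * ⌊θ⌋ + 1 := by simpa using hE 1 le_rfl
    have hrval : r = 2 * (⌊θ⌋ + 1) := by omega
    have hbound : ∀ i : Fin n, μneg (K i) ≤ 2 * ((K i : ℤ) * (⌊θ⌋ + 1)) - 1 := by
      intro i
      rw [hE (K i) (hK i)]
      have hKpos : (0:ℝ) < (K i : ℝ) := by
        have := hK i; exact_mod_cast Nat.lt_of_lt_of_le Nat.zero_lt_one this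
      have hlt : ((K i : ℕ) : ℝ) * θ < (((K i : ℤ) * (⌊θ⌋ + 1) : ℤ) : ℝ) := by
        push_cast
        have := Int.lt_floor_add_one θ
        nlinarith
      have hfl := Int.floor_lt.mpr hlt
      omega
    have hsum : ∑ i, μneg (K i) ≤ ∑ i, (2 * ((K i : ℤ) * (⌊θ⌋ + 1)) - 1) :=
      Finset.sum_le_sum fun i _ => hbound i
    have hsum2 : ∑ i, (2 * ((K i : ℤ) * (⌊θ⌋ + 1)) - 1)
        = 2 * ((k : ℤ) * (⌊θ⌋ + 1)) - n := by
      rw [Finset.sum_sub_distrib, hkcast, Finset.sum_mul, Finset.mul_sum]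
      simp
    rw [hμk, hrval]
    have := hsum2 ▸ hsum
    linarith
  · -- hyperbolic negative ends
    have h1 : μneg 1 = s := by simpa using hH 1 le_rfl
    have hsum : ∑ i, μneg (K i) = (k : ℤ) * s := by
      rw [hkcast, Finset.sum_mul]
      exact Finset.sum_congr rfl fun i _ => hH (K i) (hK i)
    rw [hμk, hsum]
    have hs : s = r - 1 := by omega
    rw [hs]
    nlinarith
end

section
/- Let μ₊ and μ₋ be Conley–Zehnder iteration sequences with μ₊(1) − μ₋(1) = 1 and with μ₋ of hyperbolic type, and let k₁, …, k_n be positive integers with k = k₁ + ⋯ + k_n. Then (n − 1) + μ₊(k) − (μ₋(k₁) + ⋯ + μ₋(k_n)) ≥ n. (This is case (iii) of the paper's proposition: a genus-zero branched k-fold cover with one positive puncture of an index-1 cylinder whose negative asymptotic orbit γ₋ is hyperbolic has Fredholm index at least n.) -/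
/-- Case (iii) of the proposition on covers of nontrivial cylinders: if
μ₊(1) − μ₋(1) = 1 with μ₋ of hyperbolic type and k = k₁ + ⋯ + kₙ with
each kᵢ ≥ 1, then (n − 1) + μ₊(k) − ∑ᵢ μ₋(kᵢ) ≥ n. -/
theorem cz_cover_cylinder_index_neg_hyperbolic (μpos μneg : ℕ → ℤ)
    (hpos : IsCZSeq μpos) (hneg : IsCZSeq μneg)
    (h : μpos 1 - μneg 1 = 1) (hhyp : IsHyperbolicCZSeq μneg)
    (n : ℕ) (hn : 1 ≤ n) (K : Fin n → ℕ) (hK : ∀ i, 1 ≤ K i)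
    (k : ℕ) (hk : k = ∑ i, K i) :
    ((n : ℤ) - 1) + μpos k - ∑ i, μneg (K i) ≥ n := by
  obtain ⟨r, hr⟩ := hhyp
  have hkn : n ≤ k := by
    rw [hk]
    calc (n : ℕ) = ∑ _i : Fin n, 1 := by simp
    _ ≤ ∑ i, K i := Finset.sum_le_sum (fun i _ => hK i)
  have hk1 : 1 ≤ k := le_trans hn hkn
  have hsum : ∑ i, μneg (K i) = (k : ℤ) * r := by
    rw [hk]
    push_cast
    rw [Finset.sum_mul]
    exact Finset.sum_congr rfl (fun i _ => by rw [hr (K i) (hK i)])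
  rw [hsum]
  rcases hpos with hell | hhypp
  · obtain ⟨θ, hθ, hμ⟩ := hell
    have h1 : μpos 1 = 2 * ⌊θ⌋ + 1 := by simpa using hμ 1 le_rfl
    have hr1 : μneg 1 = r := by simpa using hr 1 le_rfl
    have hrval : r = 2 * ⌊θ⌋ := by omega
    have hμk : μpos k = 2 * ⌊(k : ℝ) * θ⌋ + 1 := hμ k hk1
    have hfl : (k : ℤ) * ⌊θ⌋ ≤ ⌊(k : ℝ) * θ⌋ := by
      rw [Int.le_floor]
      push_cast
      exact mul_le_mul_of_nonneg_left (Int.floor_le θ) (by positivity)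
    rw [hμk, hrval]
    have : (n : ℤ) ≥ 1 := by exact_mod_cast hn
    nlinarith [hfl]
  · obtain ⟨s, hs⟩ := hhypp
    have h1 : μpos 1 = s := by simpa using hs 1 le_rfl
    have hr1 : μneg 1 = r := by simpa using hr 1 le_rfl
    have hμk : μpos k = (k : ℤ) * s := hs k hk1
    have hkn' : (n : ℤ) ≤ k := by exact_mod_cast hkn
    have : s = r + 1 := by omega
    rw [hμk, this]
    have : (n : ℤ) ≥ 1 := by exact_mod_cast hn
    nlinarith
end

section
/- Let μ be a Conley–Zehnder iteration sequence and let k₁, …, k_n be positive integers with k = k₁ + ⋯ + k_n. Then (n − 1) + μ(k) − (μ(k₁) + ⋯ + μ(k_n)) ≥ 0; moreover, if μ is of hyperbolic type then (n − 1) + μ(k) − (μ(k₁) + ⋯ + μ(k_n)) = n − 1. (This is the paper's proposition on covers of trivial cylinders: a genus-zero k-fold cover with one positive puncture of the trivial cylinder over a nondegenerate Reeb orbit γ, lying in M^J(γ^k; γ^{k₁},…,γ^{k_n}), has Fredholm index at least 0, equal to n − 1 when γ is hyperbolic.) -/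
/-- Covers of trivial cylinders: if k = k₁ + ⋯ + kₙ with each kᵢ ≥ 1, then
(n − 1) + μ(k) − ∑ᵢ μ(kᵢ) ≥ 0, with equality to n − 1 when μ is of
hyperbolic type. -/
theorem cz_cover_trivial_cylinder_index (μ : ℕ → ℤ) (hμ : IsCZSeq μ)
    (n : ℕ) (hn : 1 ≤ n) (K : Fin n → ℕ) (hK : ∀ i, 1 ≤ K i)
    (k : ℕ) (hk : k = ∑ i, K i) :
    ((n : ℤ) - 1) + μ k - ∑ i, μ (K i) ≥ 0 ∧
      (IsHyperbolicCZSeq μ →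
        ((n : ℤ) - 1) + μ k - ∑ i, μ (K i) = (n : ℤ) - 1) := by
  have hk1 : 1 ≤ k := by
    subst hk
    calc 1 ≤ n := hn
    _ = ∑ _i : Fin n, 1 := by simp
    _ ≤ ∑ i, K i := Finset.sum_le_sum fun i _ => hK i
  have hyp : IsHyperbolicCZSeq μ → ((n : ℤ) - 1) + μ k - ∑ i, μ (K i) = (n : ℤ) - 1 := by
    rintro ⟨r, hr⟩
    have hs : ∑ i, μ (K i) = ∑ i, (K i : ℤ) * r :=
      Finset.sum_congr rfl fun i _ => hr _ (hK i)
    rw [hr k hk1, hs, ← Finset.sum_mul]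
    have : ((k : ℤ)) = ∑ i, (K i : ℤ) := by push_cast [hk]; rfl
    rw [this]
    ring
  refine ⟨?_, hyp⟩
  rcases hμ with ⟨θ, hθ, h⟩ | h
  · have hfloor : ∑ i, ⌊(K i : ℝ) * θ⌋ ≤ ⌊(k : ℝ) * θ⌋ := by
      rw [Int.le_floor]
      push_cast [hk]
      rw [Finset.sum_mul]
      exact Finset.sum_le_sum fun i _ => Int.floor_le _
    have hs : ∑ i, μ (K i) = ∑ i, (2 * ⌊(K i : ℝ) * θ⌋ + 1) :=
      Finset.sum_congr rfl fun i _ => h _ (hK i)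
    rw [h k hk1, hs, Finset.sum_add_distrib, ← Finset.mul_sum]
    simp only [Finset.sum_const, Finset.card_univ, Fintype.card_fin, smul_eq_mul, nsmul_eq_mul, mul_one]
    linarith
  · have hn' : (1:ℤ) ≤ (n:ℤ) := by exact_mod_cast hn
    linarith [hyp h]
end
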